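/- Under the same eigenfunction assumptions (Lψ = −λψ, L*φ = −λφ with ψ, φ > 0), define Φ := −log φ and the operator L_Z f := β·Df − Df·aDΦ + (1/2) tr[a D²f], where β_i = −b_i + Σ_j ∂(a_{ij})/∂x_j. Then L_Z*(φψ)(x) = 0 for all x ∈ G, i.e., φψ is also a stationary density for L_Z. -/

import Mathlib

open Matrix

/-- Partial derivative `∂f/∂x_i` of `f : ℝ^d → ℝ`. -/
noncomputable def pd {d : ℕ} (f : (Fin d → ℝ) → ℝ) (i : Fin d) (x : Fin d → ℝ) : ℝ :=
  fderiv ℝ f x (Pi.single i 1)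

/-- Gradient of `f : ℝ^d → ℝ`. -/
noncomputable def grad {d : ℕ} (f : (Fin d → ℝ) → ℝ) (x : Fin d → ℝ) : Fin d → ℝ :=
  fun i => pd f i x

/-- Second partial derivative `∂²f/∂x_i∂x_j`. -/
noncomputable def pd2 {d : ℕ} (f : (Fin d → ℝ) → ℝ) (i j : Fin d) (x : Fin d → ℝ) : ℝ :=
  pd (pd f j) i x

/-- Hessian matrix of `f : ℝ^d → ℝ`. -/
noncomputable def hess {d : ℕ} (f : (Fin d → ℝ) → ℝ) (x : Fin d → ℝ) :
    Matrix (Fin d) (Fin d) ℝ :=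
  Matrix.of fun i j => pd2 f i j x


/-- The drift `β` of the formal adjoint `L*`: `β_i = −b_i + Σ_j ∂_j a_{ij}`. -/
noncomputable def betaOf {d : ℕ} (a : (Fin d → ℝ) → Matrix (Fin d) (Fin d) ℝ)
    (b : (Fin d → ℝ) → (Fin d → ℝ)) (x : Fin d → ℝ) : Fin d → ℝ :=
  fun i => -(b x i) + ∑ j, pd (fun y => a y i j) j x

/-- The zeroth order coefficient of `L*`:
`c = −(1/2)Σ_{i,j} ∂_i∂_j a_{ij} + Σ_i ∂_i b_i`. -/
noncomputable def cOf {d : ℕ} (a : (Fin d → ℝ) → Matrix (Fin d) (Fin d) ℝ)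
    (b : (Fin d → ℝ) → (Fin d → ℝ)) (x : Fin d → ℝ) : ℝ :=
  -(1 / 2) * ∑ i, ∑ j, pd2 (fun y => a y i j) i j x + ∑ i, pd (fun y => b y i) i x

/-- The drift of the operator `L_Z f = β·Df − Df·aDΦ + (1/2)tr[a D²f]`, i.e. `β − aDΦ`. -/
noncomputable def driftZ {d : ℕ} (a : (Fin d → ℝ) → Matrix (Fin d) (Fin d) ℝ)
    (b : (Fin d → ℝ) → (Fin d → ℝ)) (Φ : (Fin d → ℝ) → ℝ) (x : Fin d → ℝ) : Fin d → ℝ :=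
  fun i => betaOf a b x i - (a x).mulVec (grad Φ x) i

section pdlemmas

lemma pd_congr {d : ℕ} {f g : (Fin d → ℝ) → ℝ} {x : Fin d → ℝ}
    (h : f =ᶠ[nhds x] g) (i : Fin d) : pd f i x = pd g i x := by
  unfold pd; rw [h.fderiv_eq]

lemma pd_neg {d : ℕ} (f : (Fin d → ℝ) → ℝ) (i : Fin d) (x : Fin d → ℝ) :
    pd (fun y => -f y) i x = -pd f i x := by
  unfold pd; rw [fderiv_fun_neg]; simp

lemma pd_add {d : ℕ} {f g : (Fin d → ℝ) → ℝ} {x : Fin d → ℝ}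
    (hf : DifferentiableAt ℝ f x) (hg : DifferentiableAt ℝ g x) (i : Fin d) :
    pd (fun y => f y + g y) i x = pd f i x + pd g i x := by
  unfold pd; rw [fderiv_fun_add hf hg]; simp

lemma pd_mul {d : ℕ} {f g : (Fin d → ℝ) → ℝ} {x : Fin d → ℝ}
    (hf : DifferentiableAt ℝ f x) (hg : DifferentiableAt ℝ g x) (i : Fin d) :
    pd (fun y => f y * g y) i x = pd f i x * g x + f x * pd g i x := by
  unfold pd; rw [fderiv_fun_mul hf hg]; simp; ring

lemma pd_inv {d : ℕ} {g : (Fin d → ℝ) → ℝ} {x : Fin d → ℝ}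
    (hg : DifferentiableAt ℝ g x) (h0 : g x ≠ 0) (i : Fin d) :
    pd (fun y => (g y)⁻¹) i x = -pd g i x / (g x)^2 := by
  unfold pd
  have h := ((hasFDerivAt_inv' (𝕜 := ℝ) h0).comp x hg.hasFDerivAt).fderiv
  rw [show (fun y => (g y)⁻¹) = Inv.inv ∘ g from rfl, h]
  simp only [ContinuousLinearMap.comp_apply, ContinuousLinearMap.neg_apply,
    ContinuousLinearMap.mulLeftRight_apply]
  rw [div_eq_mul_inv, sq, mul_inv]
  ring

lemma pd_div {d : ℕ} {f g : (Fin d → ℝ) → ℝ} {x : Fin d → ℝ}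
    (hf : DifferentiableAt ℝ f x) (hg : DifferentiableAt ℝ g x) (h0 : g x ≠ 0) (i : Fin d) :
    pd (fun y => f y / g y) i x = (pd f i x * g x - f x * pd g i x) / (g x)^2 := by
  have : (fun y => f y / g y) = fun y => f y * (g y)⁻¹ := by
    funext y; rw [div_eq_mul_inv]
  rw [this, pd_mul (g := fun y => (g y)⁻¹) hf (hg.inv h0), pd_inv hg h0]
  field_simp
  ring

lemma pd_sum {d : ℕ} {ι : Type*} (u : Finset ι) {f : ι → (Fin d → ℝ) → ℝ} {x : Fin d → ℝ}
    (h : ∀ k ∈ u, DifferentiableAt ℝ (f k) x) (i : Fin d) :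
    pd (fun y => ∑ k ∈ u, f k y) i x = ∑ k ∈ u, pd (f k) i x := by
  unfold pd; rw [fderiv_fun_sum h]; simp

lemma pd_log {d : ℕ} {f : (Fin d → ℝ) → ℝ} {x : Fin d → ℝ}
    (hf : DifferentiableAt ℝ f x) (h0 : f x ≠ 0) (i : Fin d) :
    pd (fun y => Real.log (f y)) i x = pd f i x / f x := by
  unfold pd
  rw [(hf.hasFDerivAt.log h0).fderiv]
  simp [div_eq_inv_mul]

lemma differentiableAt_pd {d : ℕ} {f : (Fin d → ℝ) → ℝ} {x : Fin d → ℝ}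
    (hf : ContDiffAt ℝ 2 f x) (j : Fin d) : DifferentiableAt ℝ (pd f j) x := by
  have h1 : ContDiffAt ℝ 1 (fderiv ℝ f) x := hf.fderiv_right (by norm_num)
  have h2 : DifferentiableAt ℝ (fderiv ℝ f) x := h1.differentiableAt (by norm_num)
  exact h2.clm_apply (differentiableAt_const _)

lemma sum_swapAB {d : ℕ} (A : Matrix (Fin d) (Fin d) ℝ) (hA : A.IsSymm)
    (f : Fin d → Fin d → ℝ) :
    ∑ i, ∑ j, A i j * f i j = ∑ i, ∑ j, A i j * f j i := by
  rw [Finset.sum_comm]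
  refine Finset.sum_congr rfl fun i _ => Finset.sum_congr rfl fun j _ => ?_
  rw [hA.apply i j]

lemma final_algebra {d : ℕ} (A : Matrix (Fin d) (Fin d) ℝ) (hA : A.IsSymm)
    (P Q B DB : Fin d → ℝ) (FM SM D2 : Fin d → Fin d → ℝ)
    (DA : Fin d → Fin d → Fin d → ℝ)
    (F Ψ lam : ℝ) (hF : F ≠ 0)
    (hDAsym : ∀ i j k, DA i j k = DA j i k)
    (hφe : ∑ i, (-(B i) + ∑ j, DA i j j) * P i + 1 / 2 * ∑ i, ∑ j, A i j * FM j i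
        - (-(1 / 2) * ∑ i, ∑ j, D2 i j + ∑ i, DB i) * F = -lam * F)
    (hψe : ∑ i, B i * Q i + 1 / 2 * ∑ i, ∑ j, A i j * SM j i = -lam * Ψ) :
    ∑ i, (-(-(B i) + (∑ j, DA i j j) + ∑ j, A i j * (P j / F)) + ∑ j, DA i j j)
        * (P i * Ψ + F * Q i)
      + 1 / 2 * ∑ i, ∑ j, A i j
          * (FM j i * Ψ + P i * Q j + (P j * Q i + F * SM j i))
      - (-(1 / 2) * ∑ i, ∑ j, D2 i j
          + ∑ i, (-(DB i) + (∑ j, D2 i j)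
            + ∑ j, (DA i j i * (P j / F)
                + A i j * ((FM i j * F - P j * P i) / F ^ 2)))) * (F * Ψ)
    = 0 := by
  have S1 : ∑ i, ∑ j, A i j * (P i * Q j) = ∑ i, ∑ j, A i j * (P j * Q i) :=
    sum_swapAB A hA (fun i j => P i * Q j)
  have S2 : ∑ i, ∑ j, A i j * FM i j = ∑ i, ∑ j, A i j * FM j i :=
    sum_swapAB A hA (fun i j => FM i j)
  have S3 : ∑ i, ∑ j, DA i j i * P j = ∑ i, ∑ j, DA i j j * P i := by
    rw [Finset.sum_comm]
    refine Finset.sum_congr rfl fun i _ => Finset.sum_congr rfl fun j _ => ?_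
    rw [hDAsym j i j]
  have E1 : ∑ i, (-(-(B i) + (∑ j, DA i j j) + ∑ j, A i j * (P j / F)) + ∑ j, DA i j j)
        * (P i * Ψ + F * Q i)
      = (∑ i, B i * P i) * Ψ + F * (∑ i, B i * Q i)
        - (∑ i, ∑ j, A i j * (P j * P i)) * (Ψ / F)
        - ∑ i, ∑ j, A i j * (P j * Q i) := by
    rw [Finset.sum_mul, Finset.mul_sum, Finset.sum_mul,
      ← Finset.sum_add_distrib, ← Finset.sum_sub_distrib, ← Finset.sum_sub_distrib]
    refine Finset.sum_congr rfl fun i _ => ?_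
    have hS : (∑ j, A i j * (P j / F)) * (P i * Ψ + F * Q i)
        = (∑ j, A i j * (P j * P i)) * (Ψ / F) + ∑ j, A i j * (P j * Q i) := by
      rw [Finset.sum_mul, Finset.sum_mul, ← Finset.sum_add_distrib]
      refine Finset.sum_congr rfl fun j _ => ?_
      field_simp
    linear_combination -hS
  have E2 : ∑ i, ∑ j, A i j * (FM j i * Ψ + P i * Q j + (P j * Q i + F * SM j i))
      = (∑ i, ∑ j, A i j * FM j i) * Ψ + (∑ i, ∑ j, A i j * (P i * Q j))
        + (∑ i, ∑ j, A i j * (P j * Q i)) + F * (∑ i, ∑ j, A i j * SM j i) := by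
    rw [Finset.sum_mul, Finset.mul_sum,
      ← Finset.sum_add_distrib, ← Finset.sum_add_distrib, ← Finset.sum_add_distrib]
    refine Finset.sum_congr rfl fun i _ => ?_
    rw [Finset.sum_mul, Finset.mul_sum,
      ← Finset.sum_add_distrib, ← Finset.sum_add_distrib, ← Finset.sum_add_distrib]
    exact Finset.sum_congr rfl fun j _ => by ring
  have E3 : ∑ i, (-(DB i) + (∑ j, D2 i j)
        + ∑ j, (DA i j i * (P j / F) + A i j * ((FM i j * F - P j * P i) / F ^ 2)))
      = -(∑ i, DB i) + (∑ i, ∑ j, D2 i j)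
        + (∑ i, ∑ j, DA i j i * P j) * (1 / F)
        + (∑ i, ∑ j, A i j * FM i j) * (1 / F)
        - (∑ i, ∑ j, A i j * (P j * P i)) * (1 / F ^ 2) := by
    rw [Finset.sum_mul, Finset.sum_mul, Finset.sum_mul, ← Finset.sum_neg_distrib]
    rw [← Finset.sum_add_distrib, ← Finset.sum_add_distrib, ← Finset.sum_add_distrib,
      ← Finset.sum_sub_distrib]
    refine Finset.sum_congr rfl fun i _ => ?_
    have hS : ∑ j, (DA i j i * (P j / F) + A i j * ((FM i j * F - P j * P i) / F ^ 2))
        = (∑ j, DA i j i * P j) * (1 / F) + (∑ j, A i j * FM i j) * (1 / F)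
          - (∑ j, A i j * (P j * P i)) * (1 / F ^ 2) := by
      rw [Finset.sum_mul, Finset.sum_mul, Finset.sum_mul,
        ← Finset.sum_add_distrib, ← Finset.sum_sub_distrib]
      refine Finset.sum_congr rfl fun j _ => ?_
      field_simp
      ring
    linear_combination hS
  have E4 : ∑ i, (-(B i) + ∑ j, DA i j j) * P i
      = -(∑ i, B i * P i) + ∑ i, ∑ j, DA i j j * P i := by
    rw [← Finset.sum_neg_distrib, ← Finset.sum_add_distrib]
    refine Finset.sum_congr rfl fun i _ => ?_
    rw [add_mul, Finset.sum_mul]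
    ring
  rw [E4] at hφe
  rw [E1, E2, E3, S1, S2, S3]
  have hclear : (-(1 / 2) * ∑ i, ∑ j, D2 i j
      + (-(∑ i, DB i) + (∑ i, ∑ j, D2 i j)
        + (∑ i, ∑ j, DA i j j * P i) * (1 / F)
        + (∑ i, ∑ j, A i j * FM j i) * (1 / F)
        - (∑ i, ∑ j, A i j * (P j * P i)) * (1 / F ^ 2))) * (F * Ψ)
      = ((1 / 2) * (∑ i, ∑ j, D2 i j) - (∑ i, DB i)) * (F * Ψ)
        + ((∑ i, ∑ j, DA i j j * P i) + (∑ i, ∑ j, A i j * FM j i)) * Ψ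
        - (∑ i, ∑ j, A i j * (P j * P i)) * (Ψ / F) := by
    field_simp
    ring
  rw [hclear]
  linear_combination (-Ψ) * hφe + F * hψe

end pdlemmas

/-- if `Lψ = −λψ` and `L*φ = −λφ` with `ψ, φ > 0` C² on `G`, and
`Φ := −log φ`, then the formal adjoint `L_Z*` of the operator
`L_Z f = β·Df − Df·aDΦ + (1/2)tr[a D²f]` (computed via the usual formula for second order
operators, i.e. with drift `βZ := β − aDΦ`, adjoint drift `(βZ)*_i = −(βZ)_i + Σ_j ∂_j a_{ij}`
and zeroth order coefficient `−(1/2)Σ ∂_i∂_j a_{ij} + Σ_i ∂_i (βZ)_i`) satisfies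
`L_Z*(φψ) = 0` on `G`, i.e. `φψ` is a stationary density for `L_Z` as well. -/
theorem stmt8 {d : ℕ} (G : Set (Fin d → ℝ)) (hG : IsOpen G)
    (a : (Fin d → ℝ) → Matrix (Fin d) (Fin d) ℝ) (hsym : ∀ x, (a x).IsSymm)
    (hapos : ∀ x ∈ G, (a x).PosDef) (ha : ∀ i j, ContDiffOn ℝ 2 (fun y => a y i j) G)
    (b : (Fin d → ℝ) → (Fin d → ℝ)) (hb : ∀ i, ContDiffOn ℝ 1 (fun y => b y i) G)
    (lam : ℝ) (ψ φ : (Fin d → ℝ) → ℝ)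
    (hψ : ContDiffOn ℝ 2 ψ G) (hφ : ContDiffOn ℝ 2 φ G)
    (hψpos : ∀ x ∈ G, 0 < ψ x) (hφpos : ∀ x ∈ G, 0 < φ x)
    (hψeig : ∀ x ∈ G,
      b x ⬝ᵥ grad ψ x + (1 / 2) * (a x * hess ψ x).trace = -lam * ψ x)
    (hφeig : ∀ x ∈ G,
      betaOf a b x ⬝ᵥ grad φ x + (1 / 2) * (a x * hess φ x).trace
        - cOf a b x * φ x = -lam * φ x)
    (Φ : (Fin d → ℝ) → ℝ) (hΦ : Φ = fun x => -Real.log (φ x)) :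
    ∀ x ∈ G,
      (fun i => -(driftZ a b Φ x i) + ∑ j, pd (fun y => a y i j) j x)
          ⬝ᵥ grad (fun y => φ y * ψ y) x
        + (1 / 2) * (a x * hess (fun y => φ y * ψ y) x).trace
        - (-(1 / 2) * ∑ i, ∑ j, pd2 (fun y => a y i j) i j x
            + ∑ i, pd (fun y => driftZ a b Φ y i) i x) * (φ x * ψ x)
      = 0 := by
  intro x hx
  have hmem : G ∈ nhds x := hG.mem_nhds hx
  have hφat : ∀ y ∈ G, ContDiffAt ℝ 2 φ y := fun y hy => hφ.contDiffAt (hG.mem_nhds hy)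
  have hψat : ∀ y ∈ G, ContDiffAt ℝ 2 ψ y := fun y hy => hψ.contDiffAt (hG.mem_nhds hy)
  have haat : ∀ i j, ∀ y ∈ G, ContDiffAt ℝ 2 (fun z => a z i j) y :=
    fun i j y hy => (ha i j).contDiffAt (hG.mem_nhds hy)
  have dφ : ∀ y ∈ G, DifferentiableAt ℝ φ y :=
    fun y hy => (hφat y hy).differentiableAt two_ne_zero
  have dψ : ∀ y ∈ G, DifferentiableAt ℝ ψ y :=
    fun y hy => (hψat y hy).differentiableAt two_ne_zero
  have da : ∀ i j, ∀ y ∈ G, DifferentiableAt ℝ (fun z => a z i j) y :=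
    fun i j y hy => (haat i j y hy).differentiableAt two_ne_zero
  have db : ∀ i, ∀ y ∈ G, DifferentiableAt ℝ (fun z => b z i) y :=
    fun i y hy => ((hb i).contDiffAt (hG.mem_nhds hy)).differentiableAt one_ne_zero
  have dpdφ : ∀ j, ∀ y ∈ G, DifferentiableAt ℝ (pd φ j) y :=
    fun j y hy => differentiableAt_pd (hφat y hy) j
  have dpda : ∀ i j k, ∀ y ∈ G, DifferentiableAt ℝ (pd (fun z => a z i j) k) y :=
    fun i j k y hy => differentiableAt_pd (haat i j y hy) k
  have φne : ∀ y ∈ G, φ y ≠ 0 := fun y hy => (hφpos y hy).ne'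
  have ddiv : ∀ j, DifferentiableAt ℝ (fun y => pd φ j y / φ y) x := by
    intro j
    have h : DifferentiableAt ℝ (fun y => pd φ j y * (φ y)⁻¹) x :=
      (dpdφ j x hx).mul ((dφ x hx).inv (φne x hx))
    simpa [div_eq_mul_inv] using h
  -- partials of Φ
  have hΦpd : ∀ y ∈ G, ∀ j, pd Φ j y = -(pd φ j y / φ y) := by
    intro y hy j
    rw [hΦ, show (fun z => -Real.log (φ z)) = (fun z => -(Real.log (φ z))) from rfl,
      pd_neg, pd_log (dφ y hy) (φne y hy)]
  -- driftZ pointwise on G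
  have hdrift : ∀ y ∈ G, ∀ i, driftZ a b Φ y i
      = -(b y i) + (∑ j, pd (fun z => a z i j) j y) + ∑ j, a y i j * (pd φ j y / φ y) := by
    intro y hy i
    unfold driftZ betaOf Matrix.mulVec
    simp only [dotProduct, grad]
    have : ∑ j, a y i j * pd Φ j y = -(∑ j, a y i j * (pd φ j y / φ y)) := by
      rw [← Finset.sum_neg_distrib]
      exact Finset.sum_congr rfl fun j _ => by rw [hΦpd y hy j]; ring
    rw [this]
    ring
  -- first partials of φψ on G
  have hpdfψ : ∀ y ∈ G, ∀ j, pd (fun z => φ z * ψ z) j y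
      = pd φ j y * ψ y + φ y * pd ψ j y :=
    fun y hy j => pd_mul (dφ y hy) (dψ y hy) j
  -- Hessian entries of φψ at x
  have hhess : ∀ i j, pd2 (fun z => φ z * ψ z) i j x
      = pd2 φ i j x * ψ x + pd φ j x * pd ψ i x
        + (pd φ i x * pd ψ j x + φ x * pd2 ψ i j x) := by
    intro i j
    show pd (pd (fun z => φ z * ψ z) j) i x = _
    rw [pd_congr (Filter.eventuallyEq_of_mem hmem (fun y hy => hpdfψ y hy j)) i,
      pd_add (f := fun y => pd φ j y * ψ y) (g := fun y => φ y * pd ψ j y)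
        ((dpdφ j x hx).mul (dψ x hx))
        ((dφ x hx).mul (differentiableAt_pd (hψat x hx) j)),
      pd_mul (dpdφ j x hx) (dψ x hx),
      pd_mul (dφ x hx) (differentiableAt_pd (hψat x hx) j)]
    rfl
  -- divergence-type derivatives of driftZ at x
  have hdz : ∀ i, pd (fun y => driftZ a b Φ y i) i x
      = -(pd (fun y => b y i) i x) + (∑ j, pd2 (fun y => a y i j) i j x)
        + ∑ j, (pd (fun y => a y i j) i x * (pd φ j x / φ x)
            + a x i j * ((pd2 φ i j x * φ x - pd φ j x * pd φ i x) / φ x ^ 2)) := by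
    intro i
    rw [pd_congr (Filter.eventuallyEq_of_mem hmem (fun y hy => hdrift y hy i)) i]
    have d1 : DifferentiableAt ℝ (fun y => -(b y i)) x := (db i x hx).neg
    have d2 : DifferentiableAt ℝ (fun y => ∑ j, pd (fun z => a z i j) j y) x :=
      DifferentiableAt.fun_sum (fun j _ => dpda i j j x hx)
    have d3 : DifferentiableAt ℝ (fun y => ∑ j, a y i j * (pd φ j y / φ y)) x :=
      DifferentiableAt.fun_sum
        (fun j _ => (da i j x hx).mul (ddiv j))
    rw [pd_add (f := fun y => -(b y i) + ∑ j, pd (fun z => a z i j) j y)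
        (g := fun y => ∑ j, a y i j * (pd φ j y / φ y)) (d1.add d2) d3,
      pd_add (f := fun y => -(b y i)) (g := fun y => ∑ j, pd (fun z => a z i j) j y) d1 d2,
      show pd (fun y => -(b y i)) i x = -(pd (fun y => b y i) i x) from pd_neg _ i x,
      pd_sum Finset.univ (fun j _ => dpda i j j x hx),
      pd_sum Finset.univ (f := fun j y => a y i j * (pd φ j y / φ y))
        (fun j _ => (da i j x hx).mul (ddiv j))]
    congr 1
    refine Finset.sum_congr rfl fun j _ => ?_
    rw [pd_mul (da i j x hx) (ddiv j),
      pd_div (dpdφ j x hx) (dφ x hx) (φne x hx)]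
    rfl
  -- eigen equations in coordinates
  have hφe : ∑ i, (-(b x i) + ∑ j, pd (fun y => a y i j) j x) * pd φ i x
      + 1 / 2 * ∑ i, ∑ j, a x i j * pd2 φ j i x
      - (-(1 / 2) * ∑ i, ∑ j, pd2 (fun y => a y i j) i j x
          + ∑ i, pd (fun y => b y i) i x) * φ x = -lam * φ x := by
    have h := hφeig x hx
    simpa only [betaOf, cOf, dotProduct, grad, Matrix.trace, Matrix.diag,
      Matrix.mul_apply, hess, Matrix.of_apply] using h
  have hψe : ∑ i, b x i * pd ψ i x
      + 1 / 2 * ∑ i, ∑ j, a x i j * pd2 ψ j i x = -lam * ψ x := by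
    have h := hψeig x hx
    simpa only [dotProduct, grad, Matrix.trace, Matrix.diag,
      Matrix.mul_apply, hess, Matrix.of_apply] using h
  -- rewrite the goal in coordinates
  simp only [dotProduct, grad, Matrix.trace, Matrix.diag, Matrix.mul_apply, hess,
    Matrix.of_apply]
  simp only [hdrift x hx, hpdfψ x hx, hhess, hdz]
  exact final_algebra (a x) (hsym x) (fun i => pd φ i x) (fun i => pd ψ i x)
    (fun i => b x i) (fun i => pd (fun y => b y i) i x)
    (fun i j => pd2 φ i j x) (fun i j => pd2 ψ i j x)
    (fun i j => pd2 (fun y => a y i j) i j x)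
    (fun i j k => pd (fun y => a y i j) k x)
    (φ x) (ψ x) lam (φne x hx)
    (fun i j k => by
      show pd (fun y => a y i j) k x = pd (fun y => a y j i) k x
      congr 1
      funext y
      exact (hsym y).apply j i)
    hφe hψe
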